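/- In a Heyting algebra, if for all elements a, b we have (a ⇨ b) ⊔ (b ⇨ a) = ⊤ (the prelinearity/linearity law), then for all γ, δ₁, δ₂ we have (γ ⇨ (δ₁ ⊔ δ₂)) ≤ (γ ⇨ δ₁) ⊔ (γ ⇨ δ₂). -/
import Mathlib

/-- In a Heyting algebra satisfying prelinearity `(a ⇨ b) ⊔ (b ⇨ a) = ⊤`,
we have `(γ ⇨ (δ₁ ⊔ δ₂)) ≤ (γ ⇨ δ₁) ⊔ (γ ⇨ δ₂)`. -/
theorem prelinear_himp_sup_le {H : Type*} [HeytingAlgebra H]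
    (hpre : ∀ a b : H, (a ⇨ b) ⊔ (b ⇨ a) = ⊤) (γ δ₁ δ₂ : H) :
    (γ ⇨ (δ₁ ⊔ δ₂)) ≤ (γ ⇨ δ₁) ⊔ (γ ⇨ δ₂) := by
  set x := γ ⇨ (δ₁ ⊔ δ₂) with hx
  have h1 : x ⊓ (δ₁ ⇨ δ₂) ≤ γ ⇨ δ₂ := by
    rw [le_himp_iff]
    calc x ⊓ (δ₁ ⇨ δ₂) ⊓ γ ≤ (δ₁ ⊔ δ₂) ⊓ (δ₁ ⇨ δ₂) := by
          refine le_inf ?_ ?_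
          · exact le_trans (inf_le_inf_right γ inf_le_left) (by rw [hx]; exact himp_inf_le)
          · exact inf_le_of_left_le inf_le_right
      _ ≤ δ₂ := by
          rw [inf_comm, inf_sup_left]
          exact sup_le himp_inf_le inf_le_right
  have h2 : x ⊓ (δ₂ ⇨ δ₁) ≤ γ ⇨ δ₁ := by
    rw [le_himp_iff]
    calc x ⊓ (δ₂ ⇨ δ₁) ⊓ γ ≤ (δ₁ ⊔ δ₂) ⊓ (δ₂ ⇨ δ₁) := by
          refine le_inf ?_ ?_
          · exact le_trans (inf_le_inf_right γ inf_le_left) (by rw [hx]; exact himp_inf_le)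
          · exact inf_le_of_left_le inf_le_right
      _ ≤ δ₁ := by
          rw [inf_comm, inf_sup_left]
          exact sup_le inf_le_right himp_inf_le
  calc x = x ⊓ ((δ₁ ⇨ δ₂) ⊔ (δ₂ ⇨ δ₁)) := by rw [hpre δ₁ δ₂, inf_top_eq]
    _ = (x ⊓ (δ₁ ⇨ δ₂)) ⊔ (x ⊓ (δ₂ ⇨ δ₁)) := inf_sup_left _ _ _
    _ ≤ (γ ⇨ δ₁) ⊔ (γ ⇨ δ₂) := sup_le (h1.trans le_sup_right) (h2.trans le_sup_left)
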